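/- Fix an integer n ≥ 1, a real number δ, and an integer μ ≥ 1. The set S ⊆ ℝⁿ × ℝⁿ of pairs (π, z) such that (i) π₁ ≥ π₂ ≥ … ≥ πₙ > 0, (ii) zᵢ + δ > 0 for all i, (iii) for every k = 1,…,n, ∑_{i=1}^k πᵢ ≥ max over all k-element subsets T of {1,…,n} of ∑_{i∈T} (zᵢ + δ)^μ, and (iv) for every integer k with 1 ≤ k ≤ μ - 1, ∑_{i=1}^n πᵢ^{k/μ} ≥ ∑_{i=1}^n (zᵢ + δ)^k, is a convex subset of ℝⁿ × ℝⁿ. -/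
import Mathlib


/-- Proposition 8: convexity of the LCM conditions of
Theorem 1 after the change of variables `π = (p + δ)^{μ↓}`.
The set of pairs `(π, z)` with `π` sorted in descending order, `π > 0`,
`zᵢ + δ > 0`, the majorization constraints (iii) (stated via maxima over
`k`-element subsets) and the power-sum constraints (iv), is convex. -/
theorem stmt_14 (n : ℕ) (hn : 1 ≤ n) (δ : ℝ) (μ : ℕ) (hμ : 1 ≤ μ) :
    Convex ℝ {pz : (Fin n → ℝ) × (Fin n → ℝ) |
      (∀ i j : Fin n, i ≤ j → pz.1 j ≤ pz.1 i) ∧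
      (∀ i, 0 < pz.1 i) ∧
      (∀ i, 0 < pz.2 i + δ) ∧
      (∀ k : ℕ, 1 ≤ k → k ≤ n → ∀ T : Finset (Fin n), T.card = k →
        ∑ i ∈ T, (pz.2 i + δ) ^ μ ≤
          ∑ i ∈ Finset.univ.filter (fun i : Fin n => (i : ℕ) < k), pz.1 i) ∧
      (∀ k : ℕ, 1 ≤ k → k ≤ μ - 1 →
        ∑ i, (pz.2 i + δ) ^ k ≤ ∑ i, pz.1 i ^ ((k : ℝ) / (μ : ℝ)))} := by
  rintro ⟨p₁, z₁⟩ ⟨h1s, h1p, h1z, h1m, h1k⟩ ⟨p₂, z₂⟩ ⟨h2s, h2p, h2z, h2m, h2k⟩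
    a b ha hb hab
  have hpos : ∀ u v : ℝ, 0 < u → 0 < v → 0 < a * u + b * v := by
    intro u v hu hv
    rcases ha.lt_or_eq with h | h
    · nlinarith [mul_pos h hu, mul_nonneg hb hv.le]
    · have hb1 : b = 1 := by linarith
      rw [← h, hb1]; simpa using hv
  simp only [Set.mem_setOf_eq, Prod.smul_mk, Prod.mk_add_mk, Pi.add_apply,
    Pi.smul_apply, smul_eq_mul]
  refine ⟨?_, ?_, ?_, ?_, ?_⟩
  · intro i j hij
    have := h1s i j hij
    have := h2s i j hij
    nlinarith [mul_le_mul_of_nonneg_left (h1s i j hij) ha,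
      mul_le_mul_of_nonneg_left (h2s i j hij) hb]
  · intro i; exact hpos _ _ (h1p i) (h2p i)
  · intro i
    have h := hpos _ _ (h1z i) (h2z i)
    have : a * (z₁ i + δ) + b * (z₂ i + δ) = a * z₁ i + b * z₂ i + δ := by
      linear_combination δ * hab
    linarith
  · intro k hk1 hkn T hT
    have hterm : ∀ i : Fin n,
        (a * z₁ i + b * z₂ i + δ) ^ μ
          ≤ a * (z₁ i + δ) ^ μ + b * (z₂ i + δ) ^ μ := by
      intro i
      have := (convexOn_pow μ).2 (Set.mem_Ici.2 (h1z i).le)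
        (Set.mem_Ici.2 (h2z i).le) ha hb hab
      simp only [smul_eq_mul] at this
      have heq : a * z₁ i + b * z₂ i + δ = a * (z₁ i + δ) + b * (z₂ i + δ) := by
        linear_combination (-δ) * hab
      rw [heq]
      exact this
    calc ∑ i ∈ T, (a * z₁ i + b * z₂ i + δ) ^ μ
        ≤ ∑ i ∈ T, (a * (z₁ i + δ) ^ μ + b * (z₂ i + δ) ^ μ) :=
          Finset.sum_le_sum fun i _ => hterm i
      _ = a * ∑ i ∈ T, (z₁ i + δ) ^ μ + b * ∑ i ∈ T, (z₂ i + δ) ^ μ := by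
          rw [Finset.sum_add_distrib, Finset.mul_sum, Finset.mul_sum]
      _ ≤ a * (∑ i ∈ Finset.univ.filter (fun i : Fin n => (i : ℕ) < k), p₁ i)
          + b * (∑ i ∈ Finset.univ.filter (fun i : Fin n => (i : ℕ) < k), p₂ i) := by
          exact add_le_add (mul_le_mul_of_nonneg_left (h1m k hk1 hkn T hT) ha)
            (mul_le_mul_of_nonneg_left (h2m k hk1 hkn T hT) hb)
      _ = ∑ i ∈ Finset.univ.filter (fun i : Fin n => (i : ℕ) < k),
            (a * p₁ i + b * p₂ i) := by
          rw [Finset.sum_add_distrib, Finset.mul_sum, Finset.mul_sum]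
  · intro k hk1 hkμ
    have hμpos : (0 : ℝ) < μ := by exact_mod_cast hμ
    have hconc := Real.concaveOn_rpow (p := (k : ℝ) / μ)
      (by positivity)
      (by
        rw [div_le_one hμpos]
        have : k < μ := by omega
        exact_mod_cast this.le)
    have hterm1 : ∀ i : Fin n,
        (a * z₁ i + b * z₂ i + δ) ^ k
          ≤ a * (z₁ i + δ) ^ k + b * (z₂ i + δ) ^ k := by
      intro i
      have := (convexOn_pow k).2 (Set.mem_Ici.2 (h1z i).le)
        (Set.mem_Ici.2 (h2z i).le) ha hb hab
      simp only [smul_eq_mul] at this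
      have heq : a * z₁ i + b * z₂ i + δ = a * (z₁ i + δ) + b * (z₂ i + δ) := by
        linear_combination (-δ) * hab
      rw [heq]
      exact this
    have hterm2 : ∀ i : Fin n,
        a * p₁ i ^ ((k : ℝ) / μ) + b * p₂ i ^ ((k : ℝ) / μ)
          ≤ (a * p₁ i + b * p₂ i) ^ ((k : ℝ) / μ) := by
      intro i
      have := hconc.2 (Set.mem_Ici.2 (h1p i).le) (Set.mem_Ici.2 (h2p i).le) ha hb hab
      simpa using this
    calc ∑ i, (a * z₁ i + b * z₂ i + δ) ^ k
        ≤ ∑ i, (a * (z₁ i + δ) ^ k + b * (z₂ i + δ) ^ k) :=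
          Finset.sum_le_sum fun i _ => hterm1 i
      _ = a * ∑ i, (z₁ i + δ) ^ k + b * ∑ i, (z₂ i + δ) ^ k := by
          rw [Finset.sum_add_distrib, Finset.mul_sum, Finset.mul_sum]
      _ ≤ a * ∑ i, p₁ i ^ ((k : ℝ) / μ) + b * ∑ i, p₂ i ^ ((k : ℝ) / μ) := by
          exact add_le_add (mul_le_mul_of_nonneg_left (h1k k hk1 hkμ) ha)
            (mul_le_mul_of_nonneg_left (h2k k hk1 hkμ) hb)
      _ = ∑ i, (a * p₁ i ^ ((k : ℝ) / μ) + b * p₂ i ^ ((k : ℝ) / μ)) := by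
          rw [Finset.sum_add_distrib, Finset.mul_sum, Finset.mul_sum]
      _ ≤ ∑ i, (a * p₁ i + b * p₂ i) ^ ((k : ℝ) / μ) :=
          Finset.sum_le_sum fun i _ => hterm2 i
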